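/- Let T, T', T'' be finite connected preorders and suppose the set C' = { v̄ : v ∈ min(T''), T ≅ T' ↘_v T'' } of bags is nonempty. Then all bags in C' have the same cardinality, say n, and ⟨δ(T), T' ⊗ T''⟩ = (1/(n·|min(T)|)) ⟨T, T' ▷ T''⟩, where T' ▷ T'' := Σ_{v ∈ min(T'')} T' ↘_v T''. -/

import Mathlib

open scoped Classical

/-- A finite preorder (quasi-order, i.e. finite topological space) on a subset
(`carrier`) of an ambient type `α`. -/
structure FinPre (α : Type*) where
  carrier : Finset α
  le : α → α → Prop
  mem_of_le : ∀ ⦃x y⦄, le x y → x ∈ carrier ∧ y ∈ carrier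
  le_refl : ∀ x ∈ carrier, le x x
  le_trans : ∀ ⦃x y z⦄, le x y → le y z → le x z

namespace FinPre

variable {α : Type*} [DecidableEq α]

/-- The strict relation `x < y`, i.e. `x ≤ y` and not `y ≤ x`. -/
def lt (T : FinPre α) (x y : α) : Prop := T.le x y ∧ ¬ T.le y x

/-- The equivalence `x ~ y` iff `x ≤ y` and `y ≤ x`. -/
def equiv (T : FinPre α) (x y : α) : Prop := T.le x y ∧ T.le y x

/-- The bag (equivalence class) of a vertex `v`. -/
noncomputable def bag (T : FinPre α) (v : α) : Finset α :=
  T.carrier.filter (fun x => T.equiv x v)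

/-- `min(T)`: the set of minimal elements (`y ≤ x` implies `x ≤ y`). -/
noncomputable def minSet (T : FinPre α) : Finset α :=
  T.carrier.filter (fun x => ∀ y, T.le y x → T.le x y)

/-- Connectivity of a subset `S`, for the graph with edges between comparable pairs. -/
def ConnOn (T : FinPre α) (S : Set α) : Prop :=
  ∀ x ∈ S, ∀ y ∈ S,
    Relation.ReflTransGen (fun a b => a ∈ S ∧ b ∈ S ∧ (T.le a b ∨ T.le b a)) x y

/-- A finite preorder is connected if it is nonempty and any two elements are linked by
a chain of comparable pairs. -/
def Connected (T : FinPre α) : Prop :=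
  T.carrier.Nonempty ∧ T.ConnOn ↑T.carrier

/-- `I` is a connected component of `S` (for the comparability graph of `T`). -/
def IsCC (T : FinPre α) (S I : Set α) : Prop :=
  I.Nonempty ∧ I ⊆ S ∧ T.ConnOn I ∧
    ∀ x ∈ I, ∀ y ∈ S, (T.le x y ∨ T.le y x) → y ∈ I

/-- `Y_- = {x ∉ Y : ∃ y ∈ Y, x ≤ y}`. -/
noncomputable def below (T : FinPre α) (Y : Finset α) : Finset α :=
  (T.carrier \ Y).filter (fun x => ∃ y ∈ Y, T.le x y)

/-- `Y ◎ T` : `Y` is an upper (open) set, the image of `Y_-` in the quotient poset `T̄`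
is a single bag belonging to `min(T̄)` (i.e. `Y_-` is nonempty, contained in the bag of
some minimal `w`), and `Y` is a connected component of
`{x : y < x for all y ∈ Y_-}`. -/
def Circ (T : FinPre α) (Y : Finset α) : Prop :=
  (∀ x ∈ Y, ∀ z, T.le x z → z ∈ Y) ∧
  ∃ w ∈ T.below Y, w ∈ T.minSet ∧ (∀ x ∈ T.below Y, T.equiv x w) ∧
    T.IsCC {x | x ∈ T.carrier ∧ ∀ y ∈ T.below Y, T.lt y x} ↑Y

/-- The induced (restricted) preorder on a subset `S`. -/
def restrict (T : FinPre α) (S : Finset α) : FinPre α where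
  carrier := T.carrier ∩ S
  le x y := T.le x y ∧ x ∈ S ∧ y ∈ S
  mem_of_le := by
    intro x y h
    rcases T.mem_of_le h.1 with ⟨hx, hy⟩
    exact ⟨Finset.mem_inter.2 ⟨hx, h.2.1⟩, Finset.mem_inter.2 ⟨hy, h.2.2⟩⟩
  le_refl := by
    intro x hx
    rcases Finset.mem_inter.1 hx with ⟨h1, h2⟩
    exact ⟨T.le_refl x h1, h2, h2⟩
  le_trans := by
    rintro x y z ⟨h1, hx, hy⟩ ⟨h2, _, hz⟩
    exact ⟨T.le_trans h1 h2, hx, hz⟩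

/-- The grafting `T' ↘_v T''` of `T'` above the vertex `v` of `T''` (auxiliary version,
with the disjointness hypotheses as arguments). -/
def graftAux (T' T'' : FinPre α) (v : α) (hd : Disjoint T'.carrier T''.carrier)
    (hv : v ∈ T''.carrier) : FinPre α where
  carrier := T'.carrier ∪ T''.carrier
  le x y := T'.le x y ∨ T''.le x y ∨ (T''.le x v ∧ y ∈ T'.carrier)
  mem_of_le := by
    rintro x y (h | h | ⟨h1, h2⟩)
    · rcases T'.mem_of_le h with ⟨hx, hy⟩
      exact ⟨Finset.mem_union_left _ hx, Finset.mem_union_left _ hy⟩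
    · rcases T''.mem_of_le h with ⟨hx, hy⟩
      exact ⟨Finset.mem_union_right _ hx, Finset.mem_union_right _ hy⟩
    · exact ⟨Finset.mem_union_right _ (T''.mem_of_le h1).1, Finset.mem_union_left _ h2⟩
  le_refl := by
    intro x hx
    rcases Finset.mem_union.1 hx with h | h
    · exact Or.inl (T'.le_refl x h)
    · exact Or.inr (Or.inl (T''.le_refl x h))
  le_trans := by
    rintro x y z (h1 | h1 | ⟨h1, h1'⟩) (h2 | h2 | ⟨h2, h2'⟩)
    · exact Or.inl (T'.le_trans h1 h2)
    · exact absurd (T''.mem_of_le h2).1 (Finset.disjoint_left.1 hd (T'.mem_of_le h1).2)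
    · exact absurd (T''.mem_of_le h2).1 (Finset.disjoint_left.1 hd (T'.mem_of_le h1).2)
    · exact absurd (T'.mem_of_le h2).1 (Finset.disjoint_right.1 hd (T''.mem_of_le h1).2)
    · exact Or.inr (Or.inl (T''.le_trans h1 h2))
    · exact Or.inr (Or.inr ⟨T''.le_trans h1 h2, h2'⟩)
    · exact Or.inr (Or.inr ⟨h1, (T'.mem_of_le h2).2⟩)
    · exact absurd (T''.mem_of_le h2).1 (Finset.disjoint_left.1 hd h1')
    · exact absurd (T''.mem_of_le h2).1 (Finset.disjoint_left.1 hd h1')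

/-- The grafting `T' ↘_v T''` of `T'` above the vertex `v` of `T''`: the preorder on
`X₁ ⊔ X₂` restricting to `T'` on `X₁` and to `T''` on `X₂`, with `q ≤ p` for `q ∈ X₂`,
`p ∈ X₁` iff `q ≤_{T''} v`.  (Junk value when the carriers are not disjoint or
`v ∉ T''`.) -/
noncomputable def graft (T' T'' : FinPre α) (v : α) : FinPre α :=
  if h : Disjoint T'.carrier T''.carrier ∧ v ∈ T''.carrier then
    T'.graftAux T'' v h.1 h.2 else T'

/-- The set of subsets `Y` of the carrier with `Y ◎ T`. -/
noncomputable def circSet (T : FinPre α) : Finset (Finset α) :=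
  T.carrier.powerset.filter (fun Y => T.Circ Y)

/-- Isomorphisms from `A` to `B` (bijections order-preserving in both directions),
encoded as maps `α → α` that are the identity outside of the carrier of `A`. -/
def Isos (A B : FinPre α) : Set (α → α) :=
  {f | Set.BijOn f ↑A.carrier ↑B.carrier ∧
    (∀ x ∈ A.carrier, ∀ y ∈ A.carrier, (A.le x y ↔ B.le (f x) (f y))) ∧
    ∀ x, x ∉ A.carrier → f x = x}

/-- `⟨A, B⟩`: the number of isomorphisms from `A` to `B`. -/
noncomputable def pairing (A B : FinPre α) : ℕ := Nat.card ↥(Isos A B)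

/-- The NAP coproduct `δ(T) = (1/|min(T)|) Σ_{Y ◎ T} T|_Y ⊗ T|_{X \ Y}`, with values
in the rational vector space spanned by pairs of finite preorders. -/
noncomputable def delta (T : FinPre α) : (FinPre α × FinPre α) →₀ ℚ :=
  ((T.minSet.card : ℚ))⁻¹ • ∑ Y ∈ T.circSet,
    Finsupp.single (T.restrict Y, T.restrict (T.carrier \ Y)) (1 : ℚ)

end FinPre

namespace NAPproof

open FinPre

variable {α : Type*} [DecidableEq α]

/-! ### Basic facts about isomorphisms -/

lemma isos_bijOn {A B : FinPre α} {f : α → α} (hf : f ∈ Isos A B) :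
    Set.BijOn f ↑A.carrier ↑B.carrier := hf.1

lemma isos_iff {A B : FinPre α} {f : α → α} (hf : f ∈ Isos A B) {x y : α}
    (hx : x ∈ A.carrier) (hy : y ∈ A.carrier) : A.le x y ↔ B.le (f x) (f y) :=
  hf.2.1 x hx y hy

lemma isos_id {A B : FinPre α} {f : α → α} (hf : f ∈ Isos A B) {x : α}
    (hx : x ∉ A.carrier) : f x = x := hf.2.2 x hx

lemma isos_maps {A B : FinPre α} {f : α → α} (hf : f ∈ Isos A B) {x : α}
    (hx : x ∈ A.carrier) : f x ∈ B.carrier := hf.1.1 hx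

lemma isos_surj {A B : FinPre α} {f : α → α} (hf : f ∈ Isos A B) {z : α}
    (hz : z ∈ B.carrier) : ∃ x ∈ A.carrier, f x = z := by
  obtain ⟨x, hx, hfx⟩ := hf.1.2.2 hz
  exact ⟨x, hx, hfx⟩

lemma isos_inj {A B : FinPre α} {f : α → α} (hf : f ∈ Isos A B) {x y : α}
    (hx : x ∈ A.carrier) (hy : y ∈ A.carrier) (h : f x = f y) : x = y :=
  hf.1.2.1 hx hy h

/-- A `Finset` version of the set of isomorphisms. -/
noncomputable def isoFinset (A B : FinPre α) : Finset (α → α) :=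
  ((A.carrier.pi (fun _ => B.carrier)).image
    (fun F x => if h : x ∈ A.carrier then F x h else x)).filter (· ∈ Isos A B)

lemma mem_isoFinset {A B : FinPre α} {f : α → α} :
    f ∈ isoFinset A B ↔ f ∈ Isos A B := by
  constructor
  · exact fun h => (Finset.mem_filter.1 h).2
  · intro hf
    refine Finset.mem_filter.2 ⟨Finset.mem_image.2 ⟨fun a _ => f a, ?_, ?_⟩, hf⟩
    · exact Finset.mem_pi.2 fun a ha => isos_maps hf ha
    · funext x
      by_cases hx : x ∈ A.carrier
      · simp [hx]
      · simp [hx, isos_id hf hx]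

lemma pairing_eq_card (A B : FinPre α) : pairing A B = (isoFinset A B).card := by
  have h : Isos A B = ↑(isoFinset A B) := by
    ext f; simp [mem_isoFinset]
  rw [pairing, h, Nat.card_coe_set_eq, Set.ncard_coe_finset]

/-! ### Graft facts -/

section Graft

variable {T' T'' : FinPre α} {v : α}

lemma graft_eq (hd : Disjoint T'.carrier T''.carrier) (hv : v ∈ T''.carrier) :
    graft T' T'' v = graftAux T' T'' v hd hv := dif_pos ⟨hd, hv⟩

lemma graft_carrier (hd : Disjoint T'.carrier T''.carrier) (hv : v ∈ T''.carrier) :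
    (graft T' T'' v).carrier = T'.carrier ∪ T''.carrier := by
  rw [graft_eq hd hv]; rfl

lemma graft_le (hd : Disjoint T'.carrier T''.carrier) (hv : v ∈ T''.carrier) {x y : α} :
    (graft T' T'' v).le x y ↔
      (T'.le x y ∨ T''.le x y ∨ (T''.le x v ∧ y ∈ T'.carrier)) := by
  rw [graft_eq hd hv]; rfl

lemma graft_le11 (hd : Disjoint T'.carrier T''.carrier) (hv : v ∈ T''.carrier) {x y : α}
    (hx : x ∈ T'.carrier) : ((graft T' T'' v).le x y ↔ T'.le x y) := by
  rw [graft_le hd hv]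
  refine ⟨?_, fun h => Or.inl h⟩
  rintro (h | h | ⟨h1, h2⟩)
  · exact h
  · exact absurd (T''.mem_of_le h).1 (Finset.disjoint_left.1 hd hx)
  · exact absurd (T''.mem_of_le h1).1 (Finset.disjoint_left.1 hd hx)

lemma graft_le22 (hd : Disjoint T'.carrier T''.carrier) (hv : v ∈ T''.carrier) {x y : α}
    (hx : x ∈ T''.carrier) (hy : y ∈ T''.carrier) :
    ((graft T' T'' v).le x y ↔ T''.le x y) := by
  rw [graft_le hd hv]
  refine ⟨?_, fun h => Or.inr (Or.inl h)⟩
  rintro (h | h | ⟨h1, h2⟩)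
  · exact absurd hx (Finset.disjoint_left.1 hd (T'.mem_of_le h).1)
  · exact h
  · exact absurd h2 (Finset.disjoint_right.1 hd hy)

lemma graft_le21 (hd : Disjoint T'.carrier T''.carrier) (hv : v ∈ T''.carrier) {x y : α}
    (hx : x ∈ T''.carrier) (hy : y ∈ T'.carrier) :
    ((graft T' T'' v).le x y ↔ T''.le x v) := by
  rw [graft_le hd hv]
  constructor
  · rintro (h | h | ⟨h1, h2⟩)
    · exact absurd hx (Finset.disjoint_left.1 hd (T'.mem_of_le h).1)
    · exact absurd hy (Finset.disjoint_right.1 hd (T''.mem_of_le h).2)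
    · exact h1
  · exact fun h => Or.inr (Or.inr ⟨h, hy⟩)

lemma graft_le12 (hd : Disjoint T'.carrier T''.carrier) (hv : v ∈ T''.carrier) {x y : α}
    (hx : x ∈ T'.carrier) (hy : y ∈ T''.carrier) :
    ¬ (graft T' T'' v).le x y := by
  rw [graft_le11 hd hv hx]
  intro h
  exact absurd hy (Finset.disjoint_left.1 hd (T'.mem_of_le h).2)

end Graft



/-! ### Small helper lemmas -/

lemma mem_minSet {S : FinPre α} {x : α} :
    x ∈ S.minSet ↔ x ∈ S.carrier ∧ ∀ y, S.le y x → S.le x y := Finset.mem_filter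

lemma mem_bag {S : FinPre α} {x y : α} :
    y ∈ S.bag x ↔ y ∈ S.carrier ∧ (S.le y x ∧ S.le x y) := Finset.mem_filter

lemma minSet_subset_carrier (S : FinPre α) : S.minSet ⊆ S.carrier :=
  Finset.filter_subset _ _

lemma bag_subset_minSet {S : FinPre α} {v : α} (hv : v ∈ S.minSet) :
    S.bag v ⊆ S.minSet := by
  intro x hx
  rcases mem_bag.1 hx with ⟨hxc, hxv, hvx⟩
  refine mem_minSet.2 ⟨hxc, fun y hy => ?_⟩
  have h1 : S.le y v := S.le_trans hy hxv
  have h2 : S.le v y := (mem_minSet.1 hv).2 y h1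
  exact S.le_trans hxv h2

lemma mem_bag_iff_le {S : FinPre α} {v x : α} (hv : v ∈ S.minSet) :
    x ∈ S.bag v ↔ x ∈ S.carrier ∧ S.le x v := by
  refine ⟨fun h => ⟨(mem_bag.1 h).1, (mem_bag.1 h).2.1⟩, fun ⟨hc, hle⟩ => ?_⟩
  exact mem_bag.2 ⟨hc, hle, (mem_minSet.1 hv).2 x hle⟩

lemma bag_eq_of_equiv {S : FinPre α} {x v : α} (h : S.equiv x v) :
    S.bag x = S.bag v := by
  ext y
  simp only [mem_bag]
  exact ⟨fun ⟨hc, h1, h2⟩ => ⟨hc, S.le_trans h1 h.1, S.le_trans h.2 h2⟩,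
    fun ⟨hc, h1, h2⟩ => ⟨hc, S.le_trans h1 h.2, S.le_trans h.1 h2⟩⟩

lemma upfilter_eq_of_equiv {S : FinPre α} {x v : α} (h : S.equiv x v) :
    S.carrier.filter (fun y => S.lt x y) = S.carrier.filter (fun y => S.lt v y) := by
  ext y
  rw [Finset.mem_filter, Finset.mem_filter]
  constructor
  · rintro ⟨hc, h1, h2⟩
    exact ⟨hc, S.le_trans h.2 h1, fun hy => h2 (S.le_trans hy h.2)⟩
  · rintro ⟨hc, h1, h2⟩
    exact ⟨hc, S.le_trans h.1 h1, fun hy => h2 (S.le_trans hy h.1)⟩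

/-! ### The isomorphism-invariant counting function -/

noncomputable def key (S : FinPre α) (x : α) : ℕ × ℕ :=
  ((S.bag x).card, (S.carrier.filter (fun y => S.lt x y)).card)

noncomputable def cnt (S : FinPre α) (p : ℕ × ℕ) : ℕ :=
  (S.minSet.filter (fun x => key S x = p)).card

section IsoInv

variable {A B : FinPre α} {f : α → α} (hf : f ∈ Isos A B)
include hf

lemma iso_minSet {x : α} (hx : x ∈ A.carrier) :
    x ∈ A.minSet ↔ f x ∈ B.minSet := by
  constructor
  · intro hm
    refine mem_minSet.2 ⟨isos_maps hf hx, fun y hy => ?_⟩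
    obtain ⟨z, hz, rfl⟩ := isos_surj hf (B.mem_of_le hy).1
    have : A.le z x := (isos_iff hf hz hx).2 hy
    exact (isos_iff hf hx hz).1 ((mem_minSet.1 hm).2 z this)
  · intro hm
    refine mem_minSet.2 ⟨hx, fun y hy => ?_⟩
    have hyc : y ∈ A.carrier := (A.mem_of_le hy).1
    have : B.le (f y) (f x) := (isos_iff hf hyc hx).1 hy
    exact (isos_iff hf hx hyc).2 ((mem_minSet.1 hm).2 (f y) this)

lemma iso_bag_card {x : α} (hx : x ∈ A.carrier) :
    (A.bag x).card = (B.bag (f x)).card := by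
  refine Finset.card_bij (fun a _ => f a) ?_ ?_ ?_
  · intro a ha
    rcases mem_bag.1 ha with ⟨hac, h1, h2⟩
    exact mem_bag.2 ⟨isos_maps hf hac, (isos_iff hf hac hx).1 h1,
      (isos_iff hf hx hac).1 h2⟩
  · intro a ha b hb h
    exact isos_inj hf (mem_bag.1 ha).1 (mem_bag.1 hb).1 h
  · intro b hb
    rcases mem_bag.1 hb with ⟨hbc, h1, h2⟩
    obtain ⟨z, hz, rfl⟩ := isos_surj hf hbc
    exact ⟨z, mem_bag.2 ⟨hz, (isos_iff hf hz hx).2 h1, (isos_iff hf hx hz).2 h2⟩, rfl⟩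

lemma iso_up_card {x : α} (hx : x ∈ A.carrier) :
    (A.carrier.filter (fun y => A.lt x y)).card
      = (B.carrier.filter (fun y => B.lt (f x) y)).card := by
  refine Finset.card_bij (fun a _ => f a) ?_ ?_ ?_
  · intro a ha
    rcases Finset.mem_filter.1 ha with ⟨hac, h1, h2⟩
    exact Finset.mem_filter.2 ⟨isos_maps hf hac,
      (isos_iff hf hx hac).1 h1, fun hy => h2 ((isos_iff hf hac hx).2 hy)⟩
  · intro a ha b hb h
    exact isos_inj hf (Finset.mem_filter.1 ha).1 (Finset.mem_filter.1 hb).1 h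
  · intro b hb
    rcases Finset.mem_filter.1 hb with ⟨hbc, h1, h2⟩
    obtain ⟨z, hz, rfl⟩ := isos_surj hf hbc
    exact ⟨z, Finset.mem_filter.2 ⟨hz, (isos_iff hf hx hz).2 h1,
      fun hy => h2 ((isos_iff hf hz hx).1 hy)⟩, rfl⟩

lemma iso_key {x : α} (hx : x ∈ A.carrier) : key A x = key B (f x) :=
  Prod.ext (iso_bag_card hf hx) (iso_up_card hf hx)

lemma cnt_eq_of_iso (p : ℕ × ℕ) : cnt A p = cnt B p := by
  refine Finset.card_bij (fun a _ => f a) ?_ ?_ ?_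
  · intro a ha
    rcases Finset.mem_filter.1 ha with ⟨ham, hak⟩
    have hac := minSet_subset_carrier A ham
    exact Finset.mem_filter.2 ⟨(iso_minSet hf hac).1 ham,
      by rw [← iso_key hf hac]; exact hak⟩
  · intro a ha b hb h
    exact isos_inj hf (minSet_subset_carrier A (Finset.mem_filter.1 ha).1)
      (minSet_subset_carrier A (Finset.mem_filter.1 hb).1) h
  · intro b hb
    rcases Finset.mem_filter.1 hb with ⟨hbm, hbk⟩
    obtain ⟨z, hz, rfl⟩ := isos_surj hf (minSet_subset_carrier B hbm)
    exact ⟨z, Finset.mem_filter.2 ⟨(iso_minSet hf hz).2 hbm,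
      by rw [iso_key hf hz]; exact hbk⟩, rfl⟩

end IsoInv

/-! ### Structure of the graft -/

section GraftStruct

variable {T' T'' : FinPre α} {v : α}

lemma minSet_graft (hd : Disjoint T'.carrier T''.carrier) (hv : v ∈ T''.minSet) :
    (graft T' T'' v).minSet = T''.minSet := by
  have hvc := minSet_subset_carrier T'' hv
  ext x
  simp only [mem_minSet, graft_carrier hd hvc, Finset.mem_union]
  constructor
  · rintro ⟨hx1 | hx2, hmin⟩
    · exfalso
      have h1 : (graft T' T'' v).le v x :=
        (graft_le21 hd hvc hvc hx1).2 (T''.le_refl v hvc)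
      exact graft_le12 hd hvc hx1 hvc (hmin v h1)
    · refine ⟨hx2, fun y hy => ?_⟩
      have hyc := (T''.mem_of_le hy).1
      have := hmin y ((graft_le22 hd hvc hyc hx2).2 hy)
      exact (graft_le22 hd hvc hx2 hyc).1 this
  · rintro ⟨hx, hmin⟩
    refine ⟨Or.inr hx, fun y hy => ?_⟩
    rcases (graft T' T'' v).mem_of_le hy with ⟨hyc, -⟩
    rw [graft_carrier hd hvc, Finset.mem_union] at hyc
    rcases hyc with hy1 | hy2
    · exact absurd hy (graft_le12 hd hvc hy1 hx)
    · have := hmin y ((graft_le22 hd hvc hy2 hx).1 hy)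
      exact (graft_le22 hd hvc hx hy2).2 this

lemma bag_graft (hd : Disjoint T'.carrier T''.carrier) (hvc : v ∈ T''.carrier) {x : α}
    (hx : x ∈ T''.carrier) : (graft T' T'' v).bag x = T''.bag x := by
  ext y
  simp only [mem_bag, graft_carrier hd hvc, Finset.mem_union, FinPre.equiv]
  constructor
  · rintro ⟨hy1 | hy2, h1, h2⟩
    · exact absurd h1 (graft_le12 hd hvc hy1 hx)
    · exact ⟨hy2, (graft_le22 hd hvc hy2 hx).1 h1, (graft_le22 hd hvc hx hy2).1 h2⟩
  · rintro ⟨hy, h1, h2⟩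
    exact ⟨Or.inr hy, (graft_le22 hd hvc hy hx).2 h1, (graft_le22 hd hvc hx hy).2 h2⟩

lemma upfilter_graft (hd : Disjoint T'.carrier T''.carrier) (hvc : v ∈ T''.carrier)
    {x : α} (hx : x ∈ T''.carrier) :
    ((graft T' T'' v).carrier.filter (fun y => (graft T' T'' v).lt x y)).card
      = (T''.carrier.filter (fun y => T''.lt x y)).card
        + (if T''.le x v then T'.carrier.card else 0) := by
  have hcar : (graft T' T'' v).carrier = T'.carrier ∪ T''.carrier := graft_carrier hd hvc
  rw [hcar, Finset.filter_union]
  have h2 : T''.carrier.filter (fun y => (graft T' T'' v).lt x y)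
      = T''.carrier.filter (fun y => T''.lt x y) := by
    apply Finset.filter_congr
    intro y hy
    simp only [FinPre.lt, graft_le22 hd hvc hx hy, graft_le22 hd hvc hy hx]
  have h1 : T'.carrier.filter (fun y => (graft T' T'' v).lt x y)
      = if T''.le x v then T'.carrier else ∅ := by
    split_ifs with hxv
    · apply Finset.filter_true_of_mem
      intro y hy
      exact ⟨(graft_le21 hd hvc hx hy).2 hxv, graft_le12 hd hvc hy hx⟩
    · apply Finset.filter_false_of_mem
      intro y hy hlt
      exact hxv ((graft_le21 hd hvc hx hy).1 hlt.1)
  rw [h1, h2, Finset.card_union_of_disjoint, add_comm]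
  · congr 1
    split_ifs <;> simp
  · exact Finset.disjoint_left.2 fun a ha hb => by
      split_ifs at ha with h
      · exact Finset.disjoint_left.1 hd ha (Finset.mem_filter.1 hb).1
      · exact absurd ha (Finset.notMem_empty a)

lemma key_graft (hd : Disjoint T'.carrier T''.carrier) (hvc : v ∈ T''.carrier)
    {x : α} (hx : x ∈ T''.carrier) :
    key (graft T' T'' v) x
      = ((T''.bag x).card,
          (T''.carrier.filter (fun y => T''.lt x y)).card
            + (if T''.le x v then T'.carrier.card else 0)) := by
  unfold key
  rw [bag_graft hd hvc hx, upfilter_graft hd hvc hx]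

end GraftStruct

/-! ### Part A: constancy of the bag cardinality -/

lemma bagcard_eq {T T' T'' : FinPre α} (hd : Disjoint T'.carrier T''.carrier)
    (hT' : T'.Connected) {v v' : α} {f f' : α → α}
    (hv : v ∈ T''.minSet) (hv' : v' ∈ T''.minSet)
    (hf : f ∈ Isos T (graft T' T'' v)) (hf' : f' ∈ Isos T (graft T' T'' v')) :
    (T''.bag v).card = (T''.bag v').card := by
  by_contra hne
  have hvc := minSet_subset_carrier T'' hv
  have hv'c := minSet_subset_carrier T'' hv'
  have ht : 0 < T'.carrier.card := Finset.card_pos.2 hT'.1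
  set t := T'.carrier.card with htdef
  set p : ℕ × ℕ := ((T''.bag v).card,
    (T''.carrier.filter (fun y => T''.lt v y)).card + t) with hpdef
  -- the set of x in min T'' with key T'' x = p
  set M := T''.minSet.filter (fun x => key T'' x = p) with hMdef
  have hbagmin : T''.bag v ⊆ T''.minSet := bag_subset_minSet hv
  have hkeyT : ∀ x ∈ T''.bag v, key T'' x ≠ p := by
    intro x hxb
    rcases mem_bag.1 hxb with ⟨hxc, h1, h2⟩
    have heq : T''.equiv x v := ⟨h1, h2⟩
    unfold key
    rw [upfilter_eq_of_equiv heq, hpdef]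
    intro hcontra
    have := congrArg Prod.snd hcontra
    simp only at this
    omega
  have claim1 : cnt (graft T' T'' v) p = (T''.bag v).card + M.card := by
    unfold cnt
    rw [minSet_graft hd hv]
    have hsplit : T''.minSet.filter (fun x => key (graft T' T'' v) x = p)
        = T''.bag v ∪ M := by
      ext x
      simp only [Finset.mem_filter, Finset.mem_union, hMdef]
      constructor
      · rintro ⟨hxm, hxk⟩
        have hxc := minSet_subset_carrier T'' hxm
        by_cases hxv : T''.le x v
        · exact Or.inl ((mem_bag_iff_le hv).2 ⟨hxc, hxv⟩)
        · right
          refine ⟨hxm, ?_⟩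
          rw [key_graft hd hvc hxc, if_neg hxv, add_zero] at hxk
          unfold key
          exact hxk
      · rintro (hxb | ⟨hxm, hxk⟩)
        · have hxm := hbagmin hxb
          rcases mem_bag.1 hxb with ⟨hxc, h1, h2⟩
          have heq : T''.equiv x v := ⟨h1, h2⟩
          refine ⟨hxm, ?_⟩
          rw [key_graft hd hvc hxc, if_pos h1, bag_eq_of_equiv heq,
            upfilter_eq_of_equiv heq]
        · have hxc := minSet_subset_carrier T'' hxm
          refine ⟨hxm, ?_⟩
          have hxv : ¬ T''.le x v := by
            intro hxv
            exact hkeyT x ((mem_bag_iff_le hv).2 ⟨hxc, hxv⟩) hxk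
          rw [key_graft hd hvc hxc, if_neg hxv, add_zero]
          exact hxk
    rw [hsplit, Finset.card_union_of_disjoint]
    exact Finset.disjoint_left.2 fun a ha hb =>
      hkeyT a ha (Finset.mem_filter.1 hb).2
  have claim2 : cnt (graft T' T'' v') p ≤ M.card := by
    unfold cnt
    rw [minSet_graft hd hv']
    apply Finset.card_le_card
    intro x hx
    rcases Finset.mem_filter.1 hx with ⟨hxm, hxk⟩
    have hxc := minSet_subset_carrier T'' hxm
    have hxv' : ¬ T''.le x v' := by
      intro hxv'
      have hxb : x ∈ T''.bag v' := (mem_bag_iff_le hv').2 ⟨hxc, hxv'⟩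
      rcases mem_bag.1 hxb with ⟨-, h1, h2⟩
      rw [key_graft hd hv'c hxc, bag_eq_of_equiv (⟨h1, h2⟩ : T''.equiv x v')] at hxk
      have h3 : (T''.bag v').card = p.1 := congrArg Prod.fst hxk
      rw [hpdef] at h3
      exact hne h3.symm
    rw [key_graft hd hv'c hxc, if_neg hxv', add_zero] at hxk
    exact Finset.mem_filter.2 ⟨hxm, hxk⟩
  have e1 : cnt T p = cnt (graft T' T'' v) p := cnt_eq_of_iso hf p
  have e2 : cnt T p = cnt (graft T' T'' v') p := cnt_eq_of_iso hf' p
  have hpos : 0 < (T''.bag v).card :=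
    Finset.card_pos.2 ⟨v, mem_bag.2 ⟨hvc, T''.le_refl v hvc, T''.le_refl v hvc⟩⟩
  omega



/-! ### Circ sets and their witnesses -/

lemma mem_below {T : FinPre α} {Y : Finset α} {x : α} :
    x ∈ T.below Y ↔ (x ∈ T.carrier ∧ x ∉ Y) ∧ ∃ y ∈ Y, T.le x y := by
  simp only [FinPre.below, Finset.mem_filter, Finset.mem_sdiff]

def CircWitP (T : FinPre α) (Y : Finset α) (w : α) : Prop :=
  w ∈ T.below Y ∧ w ∈ T.minSet ∧ (∀ x ∈ T.below Y, T.equiv x w) ∧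
    T.IsCC {x | x ∈ T.carrier ∧ ∀ y ∈ T.below Y, T.lt y x} ↑Y

noncomputable def wit (a : α) (T : FinPre α) (Y : Finset α) : α :=
  if h : ∃ w, CircWitP T Y w then h.choose else a

lemma mem_circSet {T : FinPre α} {Y : Finset α} :
    Y ∈ T.circSet ↔ Y ⊆ T.carrier ∧ T.Circ Y := by
  simp only [FinPre.circSet, Finset.mem_filter, Finset.mem_powerset]

lemma circ_exists {T : FinPre α} {Y : Finset α} (hY : Y ∈ T.circSet) :
    ∃ w, CircWitP T Y w := by
  obtain ⟨w, hw1, hw2⟩ := (mem_circSet.1 hY).2.2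
  exact ⟨w, hw1, hw2⟩

lemma wit_spec (a : α) {T : FinPre α} {Y : Finset α} (hY : Y ∈ T.circSet) :
    CircWitP T Y (wit a T Y) := by
  rw [wit, dif_pos (circ_exists hY)]
  exact (circ_exists hY).choose_spec

lemma circ_upper {T : FinPre α} {Y : Finset α} (hY : Y ∈ T.circSet) :
    ∀ x ∈ Y, ∀ z, T.le x z → z ∈ Y := (mem_circSet.1 hY).2.1

lemma circ_subset {T : FinPre α} {Y : Finset α} (hY : Y ∈ T.circSet) :
    Y ⊆ T.carrier := (mem_circSet.1 hY).1

lemma circ_nonempty (a : α) {T : FinPre α} {Y : Finset α} (hY : Y ∈ T.circSet) :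
    Y.Nonempty := by
  obtain ⟨x, hx⟩ := (wit_spec a hY).2.2.2.1
  exact ⟨x, hx⟩

lemma circ_lt (a : α) {T : FinPre α} {Y : Finset α} (hY : Y ∈ T.circSet)
    {p : α} (hp : p ∈ Y) {x : α} (hx : x ∈ T.below Y) : T.lt x p := by
  have := (wit_spec a hY).2.2.2.2.1 (by exact_mod_cast hp)
  exact this.2 x hx

lemma circ_below_iff (a : α) {T : FinPre α} {Y : Finset α} (hY : Y ∈ T.circSet)
    {x : α} : x ∈ T.below Y ↔ (x ∈ T.carrier ∧ x ∉ Y) ∧ T.le x (wit a T Y) := by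
  constructor
  · intro hx
    exact ⟨(mem_below.1 hx).1, ((wit_spec a hY).2.2.1 x hx).1⟩
  · rintro ⟨⟨hc, hn⟩, hlw⟩
    obtain ⟨p, hp⟩ := circ_nonempty a hY
    exact mem_below.2 ⟨⟨hc, hn⟩, p, hp,
      T.le_trans hlw (circ_lt a hY hp (wit_spec a hY).1).1⟩

lemma circ_cross (a : α) {T : FinPre α} {Y : Finset α} (hY : Y ∈ T.circSet)
    {x y : α} (hc : x ∈ T.carrier) (hn : x ∉ Y) (hy : y ∈ Y) :
    T.le x y ↔ T.le x (wit a T Y) := by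
  constructor
  · intro h
    exact ((wit_spec a hY).2.2.1 x (mem_below.2 ⟨⟨hc, hn⟩, y, hy, h⟩)).1
  · intro h
    exact T.le_trans h (circ_lt a hY hy (wit_spec a hY).1).1

/-! ### Restriction -/

lemma restrict_carrier {T : FinPre α} {S : Finset α} (hS : S ⊆ T.carrier) :
    (T.restrict S).carrier = S := Finset.inter_eq_right.2 hS

lemma restrict_le {T : FinPre α} {S : Finset α} {x y : α} :
    (T.restrict S).le x y ↔ T.le x y ∧ x ∈ S ∧ y ∈ S := Iff.rfl

/-! ### Splitting an isomorphism -/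

noncomputable def Yof (T T' : FinPre α) (f : α → α) : Finset α :=
  T.carrier.filter (fun x => f x ∈ T'.carrier)

noncomputable def gof (Y : Finset α) (f : α → α) : α → α :=
  fun x => if x ∈ Y then f x else x

noncomputable def hof (T : FinPre α) (Y : Finset α) (f : α → α) : α → α :=
  fun x => if x ∈ T.carrier \ Y then f x else x

noncomputable def glue (T : FinPre α) (Y : Finset α) (g h : α → α) : α → α :=
  fun x => if x ∈ Y then g x else if x ∈ T.carrier then h x else x

lemma mem_Yof {T T' : FinPre α} {f : α → α} {x : α} :
    x ∈ Yof T T' f ↔ x ∈ T.carrier ∧ f x ∈ T'.carrier := Finset.mem_filter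

section Split

variable {T T' T'' : FinPre α} {v : α} {f : α → α}
  (hd : Disjoint T'.carrier T''.carrier) (hT' : T'.Connected)
  (hv : v ∈ T''.minSet) (hf : f ∈ Isos T (graft T' T'' v))

include hd hv hf

lemma split_mem_T'' {x : α} (hx : x ∈ T.carrier) (hn : x ∉ Yof T T' f) :
    f x ∈ T''.carrier := by
  have hvc := minSet_subset_carrier T'' hv
  have := isos_maps hf hx
  rw [graft_carrier hd hvc, Finset.mem_union] at this
  rcases this with h | h
  · exact absurd (mem_Yof.2 ⟨hx, h⟩) hn
  · exact h

lemma split_upper : ∀ x ∈ Yof T T' f, ∀ z, T.le x z → z ∈ Yof T T' f := by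
  have hvc := minSet_subset_carrier T'' hv
  intro x hx z hxz
  rcases mem_Yof.1 hx with ⟨hxc, hfx⟩
  have hzc := (T.mem_of_le hxz).2
  by_contra hzn
  exact graft_le12 hd hvc hfx (split_mem_T'' hd hv hf hzc hzn)
    ((isos_iff hf hxc hzc).1 hxz)

include hT'

lemma split_Yof_nonempty : (Yof T T' f).Nonempty := by
  have hvc := minSet_subset_carrier T'' hv
  obtain ⟨z, hz⟩ := hT'.1
  obtain ⟨x, hx, hfx⟩ := isos_surj hf (by
    rw [graft_carrier hd hvc]; exact Finset.mem_union_left _ hz)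
  exact ⟨x, mem_Yof.2 ⟨hx, hfx ▸ hz⟩⟩

lemma split_below {x : α} :
    x ∈ T.below (Yof T T' f) ↔ x ∈ T.carrier ∧ x ∉ Yof T T' f ∧ T''.le (f x) v := by
  have hvc := minSet_subset_carrier T'' hv
  constructor
  · intro hx
    rcases mem_below.1 hx with ⟨⟨hc, hn⟩, y, hy, hxy⟩
    rcases mem_Yof.1 hy with ⟨hyc, hfy⟩
    have hfx := split_mem_T'' hd hv hf hc hn
    exact ⟨hc, hn, (graft_le21 hd hvc hfx hfy).1 ((isos_iff hf hc hyc).1 hxy)⟩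
  · rintro ⟨hc, hn, hlev⟩
    obtain ⟨y, hy⟩ := split_Yof_nonempty hd hT' hv hf
    rcases mem_Yof.1 hy with ⟨hyc, hfy⟩
    have hfx := split_mem_T'' hd hv hf hc hn
    exact mem_below.2 ⟨⟨hc, hn⟩, y, hy,
      (isos_iff hf hc hyc).2 ((graft_le21 hd hvc hfx hfy).2 hlev)⟩

lemma split_circ : Yof T T' f ∈ T.circSet := by
  have hvc := minSet_subset_carrier T'' hv
  set Y := Yof T T' f with hYdef
  have hYsub : Y ⊆ T.carrier := Finset.filter_subset _ _
  refine mem_circSet.2 ⟨hYsub, split_upper hd hv hf, ?_⟩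
  obtain ⟨w₀, hw₀c, hfw₀⟩ := isos_surj hf (by
    rw [graft_carrier hd hvc]; exact Finset.mem_union_right _ hvc)
  have hw₀n : w₀ ∉ Y := by
    intro hw₀Y
    exact Finset.disjoint_right.1 hd hvc (hfw₀ ▸ (mem_Yof.1 hw₀Y).2)
  have hw₀b : w₀ ∈ T.below Y :=
    (split_below hd hT' hv hf).2 ⟨hw₀c, hw₀n, hfw₀ ▸ T''.le_refl v hvc⟩
  refine ⟨w₀, hw₀b, ?_, ?_, ?_⟩
  · -- minimality of w₀ in T
    refine mem_minSet.2 ⟨hw₀c, fun y hy => ?_⟩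
    have hyc := (T.mem_of_le hy).1
    have hgle : (graft T' T'' v).le (f y) v := hfw₀ ▸ (isos_iff hf hyc hw₀c).1 hy
    by_cases hfy : f y ∈ T'.carrier
    · exact absurd hgle (graft_le12 hd hvc hfy hvc)
    · have hfy'' := split_mem_T'' hd hv hf hyc (fun hYy => hfy (mem_Yof.1 hYy).2)
      have h1 : T''.le (f y) v := (graft_le22 hd hvc hfy'' hvc).1 hgle
      have h2 : T''.le v (f y) := (mem_minSet.1 hv).2 (f y) h1
      exact (isos_iff hf hw₀c hyc).2
        (hfw₀ ▸ ((graft_le22 hd hvc hvc hfy'').2 h2 : (graft T' T'' v).le v (f y)))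
  · -- all of `below` is equivalent to w₀
    intro x hx
    rcases (split_below hd hT' hv hf).1 hx with ⟨hc, hn, hlev⟩
    have hfx := split_mem_T'' hd hv hf hc hn
    have h2 : T''.le v (f x) := (mem_minSet.1 hv).2 (f x) hlev
    constructor
    · exact (isos_iff hf hc hw₀c).2 (hfw₀ ▸ (graft_le22 hd hvc hfx hvc).2 hlev)
    · exact (isos_iff hf hw₀c hc).2 (hfw₀ ▸ (graft_le22 hd hvc hvc hfx).2 h2)
  · -- Y is a connected component
    have hYS : (↑Y : Set α) ⊆ {x | x ∈ T.carrier ∧ ∀ y ∈ T.below Y, T.lt y x} := by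
      intro p hp
      have hpY : p ∈ Y := hp
      rcases mem_Yof.1 hpY with ⟨hpc, hfp⟩
      refine ⟨hpc, fun y hyb => ?_⟩
      rcases (split_below hd hT' hv hf).1 hyb with ⟨hyc, hyn, hylev⟩
      have hfy := split_mem_T'' hd hv hf hyc hyn
      constructor
      · exact (isos_iff hf hyc hpc).2 ((graft_le21 hd hvc hfy hfp).2 hylev)
      · intro hpy
        exact graft_le12 hd hvc hfp hfy ((isos_iff hf hpc hyc).1 hpy)
    refine ⟨?_, hYS, ?_, ?_⟩
    · obtain ⟨x, hx⟩ := split_Yof_nonempty hd hT' hv hf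
      exact ⟨x, hx⟩
    · -- connectivity of Y
      intro x hx y hy
      have hxY : x ∈ Y := hx
      have hyY : y ∈ Y := hy
      have key : ∀ a b : α, Relation.ReflTransGen
          (fun a b => a ∈ (↑T'.carrier : Set α) ∧ b ∈ (↑T'.carrier : Set α)
            ∧ (T'.le a b ∨ T'.le b a)) a b →
          ∀ x₀ ∈ Y, f x₀ = a → ∀ y₀ ∈ Y, f y₀ = b →
          Relation.ReflTransGen (fun a b => a ∈ (↑Y : Set α) ∧ b ∈ (↑Y : Set α)
            ∧ (T.le a b ∨ T.le b a)) x₀ y₀ := by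
        intro a b hab
        induction hab with
        | refl =>
          intro x₀ hx₀ hfx₀ y₀ hy₀ hfy₀
          have : x₀ = y₀ := isos_inj hf (hYsub hx₀) (hYsub hy₀)
            (hfx₀.trans hfy₀.symm)
          subst this
          exact Relation.ReflTransGen.refl
        | @tail b c hab hbc ih =>
          intro x₀ hx₀ hfx₀ y₀ hy₀ hfy₀
          obtain ⟨m, hm, hfm⟩ := isos_surj hf (by
            rw [graft_carrier hd hvc]; exact Finset.mem_union_left _ hbc.1)
          have hmY : m ∈ Y := mem_Yof.2 ⟨hm, hfm ▸ hbc.1⟩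
          refine (ih x₀ hx₀ hfx₀ m hmY hfm).tail ?_
          refine ⟨hmY, hy₀, ?_⟩
          have hy₀c := hYsub hy₀
          rcases hbc.2.2 with hle | hle
          · exact Or.inl ((isos_iff hf hm hy₀c).2
              ((graft_le11 hd hvc (hfm ▸ hbc.1)).2 (by rw [hfm, hfy₀]; exact hle)))
          · exact Or.inr ((isos_iff hf hy₀c hm).2
              ((graft_le11 hd hvc (hfy₀ ▸ hbc.2.1)).2 (by rw [hfm, hfy₀]; exact hle)))
      have hxc : f x ∈ T'.carrier := (mem_Yof.1 hxY).2
      have hyc : f y ∈ T'.carrier := (mem_Yof.1 hyY).2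
      exact key (f x) (f y) (hT'.2 (f x) hxc (f y) hyc) x hxY rfl y hyY rfl
    · -- closure under comparability
      intro x hx y hyS hcomp
      have hxY : x ∈ Y := hx
      have hyc : y ∈ T.carrier := hyS.1
      rcases hcomp with h | h
      · exact split_upper hd hv hf x hxY y h
      · by_cases hyY : y ∈ Y
        · exact hyY
        · exfalso
          have hyb : y ∈ T.below Y := mem_below.2 ⟨⟨hyc, hyY⟩, x, hxY, h⟩
          exact (hyS.2 y hyb).2 (hyS.2 y hyb).1

lemma split_g : gof (Yof T T' f) f ∈ Isos (T.restrict (Yof T T' f)) T' := by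
  have hvc := minSet_subset_carrier T'' hv
  set Y := Yof T T' f with hYdef
  have hYsub : Y ⊆ T.carrier := Finset.filter_subset _ _
  have hre : (T.restrict Y).carrier = Y := restrict_carrier hYsub
  refine ⟨?_, ?_, ?_⟩
  · rw [hre]
    refine ⟨?_, ?_, ?_⟩
    · intro x hx
      have hxY : x ∈ Y := hx
      simp only [gof, if_pos hxY]
      exact (mem_Yof.1 hxY).2
    · intro x hx y hy hxy
      have hxY : x ∈ Y := hx
      have hyY : y ∈ Y := hy
      simp only [gof, if_pos hxY, if_pos hyY] at hxy
      exact isos_inj hf (hYsub hxY) (hYsub hyY) hxy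
    · intro z hz
      have hz' : z ∈ T'.carrier := hz
      obtain ⟨x, hx, hfx⟩ := isos_surj hf (by
        rw [graft_carrier hd hvc]; exact Finset.mem_union_left _ hz')
      have hxY : x ∈ Y := mem_Yof.2 ⟨hx, hfx ▸ hz'⟩
      exact ⟨x, hxY, by simp only [gof, if_pos hxY]; exact hfx⟩
  · intro x hx y hy
    rw [hre] at hx hy
    simp only [gof, if_pos hx, if_pos hy, restrict_le]
    constructor
    · rintro ⟨hle, -, -⟩
      exact (graft_le11 hd hvc (mem_Yof.1 hx).2).1 ((isos_iff hf (hYsub hx) (hYsub hy)).1 hle)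
    · intro hle
      exact ⟨(isos_iff hf (hYsub hx) (hYsub hy)).2
        ((graft_le11 hd hvc (mem_Yof.1 hx).2).2 hle), hx, hy⟩
  · intro x hx
    rw [hre] at hx
    simp only [gof, if_neg hx]

lemma split_h :
    hof T (Yof T T' f) f ∈ Isos (T.restrict (T.carrier \ Yof T T' f)) T'' := by
  have hvc := minSet_subset_carrier T'' hv
  set Y := Yof T T' f with hYdef
  set Z := T.carrier \ Y with hZdef
  have hZsub : Z ⊆ T.carrier := Finset.sdiff_subset
  have hre : (T.restrict Z).carrier = Z := restrict_carrier hZsub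
  have hmem : ∀ {x}, x ∈ Z → f x ∈ T''.carrier := by
    intro x hx
    rcases Finset.mem_sdiff.1 hx with ⟨hc, hn⟩
    exact split_mem_T'' hd hv hf hc hn
  refine ⟨?_, ?_, ?_⟩
  · rw [hre]
    refine ⟨?_, ?_, ?_⟩
    · intro x hx
      have hxZ : x ∈ Z := hx
      simp only [hof, ← hZdef, if_pos hxZ]
      exact hmem hxZ
    · intro x hx y hy hxy
      have hxZ : x ∈ Z := hx
      have hyZ : y ∈ Z := hy
      simp only [hof, ← hZdef, if_pos hxZ, if_pos hyZ] at hxy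
      exact isos_inj hf (hZsub hxZ) (hZsub hyZ) hxy
    · intro z hz
      have hz' : z ∈ T''.carrier := hz
      obtain ⟨x, hx, hfx⟩ := isos_surj hf (by
        rw [graft_carrier hd hvc]; exact Finset.mem_union_right _ hz')
      have hxZ : x ∈ Z := Finset.mem_sdiff.2 ⟨hx, fun hxY =>
        Finset.disjoint_right.1 hd hz' (hfx ▸ (mem_Yof.1 hxY).2)⟩
      exact ⟨x, hxZ, by simp only [hof, ← hZdef, if_pos hxZ]; exact hfx⟩
  · intro x hx y hy
    rw [hre] at hx hy
    simp only [hof, ← hZdef, if_pos hx, if_pos hy, restrict_le]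
    constructor
    · rintro ⟨hle, -, -⟩
      exact (graft_le22 hd hvc (hmem hx) (hmem hy)).1
        ((isos_iff hf (hZsub hx) (hZsub hy)).1 hle)
    · intro hle
      exact ⟨(isos_iff hf (hZsub hx) (hZsub hy)).2
        ((graft_le22 hd hvc (hmem hx) (hmem hy)).2 hle), hx, hy⟩
  · intro x hx
    rw [hre] at hx
    simp only [hof, ← hZdef, if_neg hx]

end Split

lemma glue_split {T T' : FinPre α} {f : α → α} (hid : ∀ x ∉ T.carrier, f x = x) :
    glue T (Yof T T' f) (gof (Yof T T' f) f) (hof T (Yof T T' f) f) = f := by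
  funext x
  by_cases hY : x ∈ Yof T T' f
  · simp only [glue, gof, if_pos hY]
  · by_cases hc : x ∈ T.carrier
    · simp only [glue, if_neg hY, if_pos hc, hof,
        if_pos (Finset.mem_sdiff.2 ⟨hc, hY⟩)]
    · have hY' : x ∉ Yof T T' f := hY
      simp only [glue, if_neg hY, if_neg hc]
      exact (hid x hc).symm



section Glue

variable {T T' T'' : FinPre α} {Y : Finset α} {g h : α → α} {v : α} (a : α)
  (hd : Disjoint T'.carrier T''.carrier)
  (hY : Y ∈ T.circSet)
  (hg : g ∈ Isos (T.restrict Y) T')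
  (hh : h ∈ Isos (T.restrict (T.carrier \ Y)) T'')

include hY

lemma wit_mem_Z : wit a T Y ∈ T.carrier \ Y := by
  rcases mem_below.1 (wit_spec a hY).1 with ⟨⟨hc, hn⟩, -⟩
  exact Finset.mem_sdiff.2 ⟨hc, hn⟩

include hh

lemma hwit_carrier : h (wit a T Y) ∈ T''.carrier := by
  apply isos_maps hh
  rw [restrict_carrier Finset.sdiff_subset]
  exact wit_mem_Z a hY

lemma hwit_min : h (wit a T Y) ∈ T''.minSet := by
  have hreZ : (T.restrict (T.carrier \ Y)).carrier = T.carrier \ Y :=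
    restrict_carrier Finset.sdiff_subset
  have hwZ := wit_mem_Z a hY
  have hwZ' : wit a T Y ∈ (T.restrict (T.carrier \ Y)).carrier := by rw [hreZ]; exact hwZ
  refine mem_minSet.2 ⟨hwit_carrier a hY hh, fun z hz => ?_⟩
  obtain ⟨u, hu, rfl⟩ := isos_surj hh (T''.mem_of_le hz).1
  have h1 : (T.restrict (T.carrier \ Y)).le u (wit a T Y) :=
    (isos_iff hh hu hwZ').2 hz
  have h2 : T.le u (wit a T Y) := (restrict_le.1 h1).1
  have h3 : T.le (wit a T Y) u := (mem_minSet.1 (wit_spec a hY).2.1).2 u h2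
  have huZ : u ∈ T.carrier \ Y := by rw [← hreZ]; exact hu
  exact (isos_iff hh hwZ' hu).1 (restrict_le.2 ⟨h3, hwZ, huZ⟩)

include hg hd

lemma glue_mem_iff (hv : v ∈ T''.minSet) :
    glue T Y g h ∈ Isos T (graft T' T'' v) ↔ v ∈ T''.bag (h (wit a T Y)) := by
  have hvc := minSet_subset_carrier T'' hv
  have hYsub : Y ⊆ T.carrier := circ_subset hY
  have hreY : (T.restrict Y).carrier = Y := restrict_carrier hYsub
  have hreZ : (T.restrict (T.carrier \ Y)).carrier = T.carrier \ Y :=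
    restrict_carrier Finset.sdiff_subset
  set w := wit a T Y with hwdef
  have hwZ : w ∈ T.carrier \ Y := wit_mem_Z a hY
  have hwc : w ∈ T.carrier := (Finset.mem_sdiff.1 hwZ).1
  have hwn : w ∉ Y := (Finset.mem_sdiff.1 hwZ).2
  have hglueY : ∀ x ∈ Y, glue T Y g h x = g x := fun x hx => if_pos hx
  have hglueZ : ∀ x, x ∈ T.carrier → x ∉ Y → glue T Y g h x = h x := by
    intro x hc hn
    simp only [glue, if_neg hn, if_pos hc]
  have hgmem : ∀ x ∈ Y, g x ∈ T'.carrier := by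
    intro x hx
    exact isos_maps hg (by rw [hreY]; exact hx)
  have hhmem : ∀ x, x ∈ T.carrier → x ∉ Y → h x ∈ T''.carrier := by
    intro x hc hn
    exact isos_maps hh (by rw [hreZ]; exact Finset.mem_sdiff.2 ⟨hc, hn⟩)
  have hhw : h w ∈ T''.carrier := hhmem w hwc hwn
  constructor
  · -- an isomorphism forces v to lie in the bag of h w
    intro hglue
    obtain ⟨p, hp⟩ := circ_nonempty a hY
    have hpc : p ∈ T.carrier := hYsub hp
    have hwp : T.le w p := (circ_lt a hY hp (wit_spec a hY).1).1
    have hgle := (isos_iff hglue hwc hpc).1 hwp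
    rw [hglueZ w hwc hwn, hglueY p hp] at hgle
    have h1 : T''.le (h w) v := (graft_le21 hd hvc hhw (hgmem p hp)).1 hgle
    exact mem_bag.2 ⟨hvc, (mem_minSet.1 hv).2 (h w) h1, h1⟩
  · -- conversely, membership in the bag gives an isomorphism
    intro hvb
    rcases mem_bag.1 hvb with ⟨-, hvhw, hhwv⟩
    refine ⟨⟨?_, ?_, ?_⟩, ?_, ?_⟩
    · -- maps to
      intro x hx
      have hxc : x ∈ T.carrier := hx
      rw [graft_carrier hd hvc]
      by_cases hxY : x ∈ Y
      · rw [hglueY x hxY]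
        exact Finset.mem_union_left _ (hgmem x hxY)
      · rw [hglueZ x hxc hxY]
        exact Finset.mem_union_right _ (hhmem x hxc hxY)
    · -- injective
      intro x hx y hy hxy
      have hxc : x ∈ T.carrier := hx
      have hyc : y ∈ T.carrier := hy
      by_cases hxY : x ∈ Y <;> by_cases hyY : y ∈ Y
      · rw [hglueY x hxY, hglueY y hyY] at hxy
        exact isos_inj hg (by rw [hreY]; exact hxY) (by rw [hreY]; exact hyY) hxy
      · rw [hglueY x hxY, hglueZ y hyc hyY] at hxy
        exact absurd (hxy ▸ hgmem x hxY)
          (Finset.disjoint_right.1 hd (hhmem y hyc hyY))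
      · rw [hglueZ x hxc hxY, hglueY y hyY] at hxy
        exfalso
        have h1 : h x ∈ T''.carrier := hhmem x hxc hxY
        rw [hxy] at h1
        exact Finset.disjoint_right.1 hd h1 (hgmem y hyY)
      · rw [hglueZ x hxc hxY, hglueZ y hyc hyY] at hxy
        exact isos_inj hh (by rw [hreZ]; exact Finset.mem_sdiff.2 ⟨hxc, hxY⟩)
          (by rw [hreZ]; exact Finset.mem_sdiff.2 ⟨hyc, hyY⟩) hxy
    · -- surjective
      intro z hz
      have hz' : z ∈ (graft T' T'' v).carrier := hz
      rw [graft_carrier hd hvc, Finset.mem_union] at hz'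
      rcases hz' with hz1 | hz2
      · obtain ⟨x, hx, hfx⟩ := isos_surj hg hz1
        rw [hreY] at hx
        exact ⟨x, hYsub hx, by rw [hglueY x hx]; exact hfx⟩
      · obtain ⟨x, hx, hfx⟩ := isos_surj hh hz2
        rw [hreZ] at hx
        rcases Finset.mem_sdiff.1 hx with ⟨hxc, hxn⟩
        exact ⟨x, hxc, by rw [hglueZ x hxc hxn]; exact hfx⟩
    · -- order-preserving in both directions
      intro x hx y hy
      by_cases hxY : x ∈ Y <;> by_cases hyY : y ∈ Y
      · rw [hglueY x hxY, hglueY y hyY]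
        rw [graft_le11 hd hvc (hgmem x hxY)]
        constructor
        · intro hle
          exact (isos_iff hg (by rw [hreY]; exact hxY) (by rw [hreY]; exact hyY)).1
            (restrict_le.2 ⟨hle, hxY, hyY⟩)
        · intro hle
          exact (restrict_le.1 ((isos_iff hg (by rw [hreY]; exact hxY)
            (by rw [hreY]; exact hyY)).2 hle)).1
      · -- x ∈ Y, y ∉ Y : both sides false
        rw [hglueY x hxY, hglueZ y hy hyY]
        constructor
        · intro hle
          exact absurd (circ_upper hY x hxY y hle) hyY
        · intro hle
          exact absurd hle (graft_le12 hd hvc (hgmem x hxY) (hhmem y hy hyY))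
      · -- x ∉ Y, y ∈ Y
        rw [hglueZ x hx hxY, hglueY y hyY]
        have hxZ : x ∈ T.carrier \ Y := Finset.mem_sdiff.2 ⟨hx, hxY⟩
        rw [graft_le21 hd hvc (hhmem x hx hxY) (hgmem y hyY)]
        constructor
        · intro hle
          have h1 : T.le x w := (circ_cross a hY hx hxY hyY).1 hle
          have h2 : T''.le (h x) (h w) := (isos_iff hh (by rw [hreZ]; exact hxZ)
            (by rw [hreZ]; exact hwZ)).1 (restrict_le.2 ⟨h1, hxZ, hwZ⟩)
          exact T''.le_trans h2 hhwv
        · intro hle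
          have h2 : T''.le (h x) (h w) := T''.le_trans hle hvhw
          have h1 : (T.restrict (T.carrier \ Y)).le x w := (isos_iff hh
            (by rw [hreZ]; exact hxZ) (by rw [hreZ]; exact hwZ)).2 h2
          exact (circ_cross a hY hx hxY hyY).2 (restrict_le.1 h1).1
      · rw [hglueZ x hx hxY, hglueZ y hy hyY]
        have hxZ : x ∈ T.carrier \ Y := Finset.mem_sdiff.2 ⟨hx, hxY⟩
        have hyZ : y ∈ T.carrier \ Y := Finset.mem_sdiff.2 ⟨hy, hyY⟩
        rw [graft_le22 hd hvc (hhmem x hx hxY) (hhmem y hy hyY)]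
        constructor
        · intro hle
          exact (isos_iff hh (by rw [hreZ]; exact hxZ) (by rw [hreZ]; exact hyZ)).1
            (restrict_le.2 ⟨hle, hxZ, hyZ⟩)
        · intro hle
          exact (restrict_le.1 ((isos_iff hh (by rw [hreZ]; exact hxZ)
            (by rw [hreZ]; exact hyZ)).2 hle)).1
    · -- identity outside the carrier
      intro x hx
      have hxY : x ∉ Y := fun hxY => hx (hYsub hxY)
      simp only [glue, if_neg hxY, if_neg hx]

end Glue



section Roundtrip

variable {T T' T'' : FinPre α} {Y : Finset α} {g h : α → α}
  (hd : Disjoint T'.carrier T''.carrier) (hYsub : Y ⊆ T.carrier)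
  (hg : g ∈ Isos (T.restrict Y) T')
  (hh : h ∈ Isos (T.restrict (T.carrier \ Y)) T'')

include hd hYsub hg hh in
lemma Yof_glue : Yof T T' (glue T Y g h) = Y := by
  ext x
  rw [mem_Yof]
  constructor
  · rintro ⟨hc, hfx⟩
    by_cases hxY : x ∈ Y
    · exact hxY
    · exfalso
      have hgl : glue T Y g h x = h x := by simp only [glue, if_neg hxY, if_pos hc]
      rw [hgl] at hfx
      have hhx : h x ∈ T''.carrier := isos_maps hh (by
        rw [restrict_carrier Finset.sdiff_subset]; exact Finset.mem_sdiff.2 ⟨hc, hxY⟩)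
      exact Finset.disjoint_right.1 hd hhx hfx
  · intro hxY
    refine ⟨hYsub hxY, ?_⟩
    have hgl : glue T Y g h x = g x := if_pos hxY
    rw [hgl]
    exact isos_maps hg (by rw [restrict_carrier hYsub]; exact hxY)

include hYsub hg in
lemma gof_glue : gof Y (glue T Y g h) = g := by
  funext x
  by_cases hxY : x ∈ Y
  · simp only [gof, glue, if_pos hxY]
  · simp only [gof, if_neg hxY]
    exact (isos_id hg (by
      rw [restrict_carrier hYsub]; exact hxY)).symm

include hh in
lemma hof_glue : hof T Y (glue T Y g h) = h := by
  funext x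
  by_cases hxZ : x ∈ T.carrier \ Y
  · rcases Finset.mem_sdiff.1 hxZ with ⟨hc, hn⟩
    simp only [hof, if_pos hxZ, glue, if_neg hn, if_pos hc]
  · simp only [hof, if_neg hxZ]
    exact (isos_id hh (by
      rw [restrict_carrier Finset.sdiff_subset]; exact hxZ)).symm

end Roundtrip

/-! ### The master counting identity -/

lemma main_count {T T' T'' : FinPre α} (hT : T.Connected) (hT' : T'.Connected)
    (hd : Disjoint T'.carrier T''.carrier) {v₀ : α} {f₀ : α → α}
    (hv₀ : v₀ ∈ T''.minSet) (hf₀ : f₀ ∈ Isos T (graft T' T'' v₀)) :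
    ∑ v ∈ T''.minSet, pairing T (graft T' T'' v)
      = (T''.bag v₀).card * ∑ Y ∈ T.circSet,
          pairing (T.restrict Y) T' * pairing (T.restrict (T.carrier \ Y)) T'' := by
  obtain ⟨a, -⟩ := hT.1
  set n := (T''.bag v₀).card with hndef
  -- the two enumerating finsets
  set D1 : Finset (Σ _ : α, α → α) :=
    T''.minSet.sigma (fun v => isoFinset T (graft T' T'' v)) with hD1
  set D2 : Finset (Σ _ : Finset α, Σ _ : (α → α) × (α → α), α) :=
    T.circSet.sigma (fun Y =>
      ((isoFinset (T.restrict Y) T') ×ˢ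
        (isoFinset (T.restrict (T.carrier \ Y)) T'')).sigma
        (fun p => T''.bag (p.2 (wit a T Y)))) with hD2
  have hbag_n : ∀ Y ∈ T.circSet, ∀ g ∈ isoFinset (T.restrict Y) T',
      ∀ h ∈ isoFinset (T.restrict (T.carrier \ Y)) T'',
      (T''.bag (h (wit a T Y))).card = n := by
    intro Y hY g hg h hh
    rw [mem_isoFinset] at hg hh
    have hwmin : h (wit a T Y) ∈ T''.minSet := hwit_min a hY hh
    have hwcar : h (wit a T Y) ∈ T''.carrier := hwit_carrier a hY hh
    have hself : h (wit a T Y) ∈ T''.bag (h (wit a T Y)) :=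
      mem_bag.2 ⟨hwcar, T''.le_refl _ hwcar, T''.le_refl _ hwcar⟩
    have hglue : glue T Y g h ∈ Isos T (graft T' T'' (h (wit a T Y))) :=
      (glue_mem_iff a hd hY hg hh hwmin).2 hself
    exact bagcard_eq hd hT' hwmin hv₀ hglue hf₀
  have hcard : D1.card = D2.card := by
    refine Finset.card_bij (fun x _ =>
      ⟨Yof T T' x.2, ⟨(gof (Yof T T' x.2) x.2, hof T (Yof T T' x.2) x.2), x.1⟩⟩)
      ?_ ?_ ?_
    · rintro ⟨v, f⟩ hx
      rcases Finset.mem_sigma.1 hx with ⟨hvm, hfm⟩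
      rw [mem_isoFinset] at hfm
      have hcirc := split_circ hd hT' hvm hfm
      have hgm := split_g hd hT' hvm hfm
      have hhm := split_h hd hT' hvm hfm
      refine Finset.mem_sigma.2 ⟨hcirc, Finset.mem_sigma.2
        ⟨Finset.mem_product.2 ⟨mem_isoFinset.2 hgm, mem_isoFinset.2 hhm⟩, ?_⟩⟩
      have hgl : glue T (Yof T T' f) (gof (Yof T T' f) f) (hof T (Yof T T' f) f)
          ∈ Isos T (graft T' T'' v) := by
        rw [glue_split (fun x hx => isos_id hfm hx)]
        exact hfm
      exact (glue_mem_iff a hd hcirc hgm hhm hvm).1 hgl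
    · rintro ⟨v1, f1⟩ h1 ⟨v2, f2⟩ h2 heq
      rcases Finset.mem_sigma.1 h1 with ⟨hv1, hf1⟩
      rcases Finset.mem_sigma.1 h2 with ⟨hv2, hf2⟩
      dsimp only at hv1 hf1 hv2 hf2
      rw [mem_isoFinset] at hf1 hf2
      dsimp only at heq
      rw [Sigma.mk.inj_iff] at heq
      obtain ⟨hYeq, hrest⟩ := heq
      have hrest' := eq_of_heq hrest
      rw [Sigma.mk.inj_iff] at hrest'
      obtain ⟨hpair, hvheq⟩ := hrest'
      have hveq : v1 = v2 := eq_of_heq hvheq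
      obtain ⟨hgeq, hheq⟩ := Prod.mk_inj.1 hpair
      have hfeq : f1 = f2 := by
        have e1 := glue_split (T := T) (T' := T') (f := f1) (fun x hx => isos_id hf1 hx)
        have e2 := glue_split (T := T) (T' := T') (f := f2) (fun x hx => isos_id hf2 hx)
        rw [← e1, ← e2, hgeq, hheq, hYeq]
      rw [Sigma.mk.inj_iff]
      exact ⟨hveq, heq_of_eq hfeq⟩
    · rintro ⟨Y, ⟨⟨g, h⟩, v⟩⟩ hb
      rcases Finset.mem_sigma.1 hb with ⟨hY, hb2⟩
      rcases Finset.mem_sigma.1 hb2 with ⟨hgh, hvb⟩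
      rcases Finset.mem_product.1 hgh with ⟨hgm, hhm⟩
      rw [mem_isoFinset] at hgm hhm
      have hvmin : v ∈ T''.minSet := bag_subset_minSet (hwit_min a hY hhm) hvb
      have hglue : glue T Y g h ∈ Isos T (graft T' T'' v) :=
        (glue_mem_iff a hd hY hgm hhm hvmin).2 hvb
      refine ⟨⟨v, glue T Y g h⟩, Finset.mem_sigma.2 ⟨hvmin, mem_isoFinset.2 hglue⟩, ?_⟩
      have hYsub : Y ⊆ T.carrier := circ_subset hY
      have e1 : Yof T T' (glue T Y g h) = Y := Yof_glue hd hYsub hgm hhm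
      dsimp only
      rw [e1, gof_glue hYsub hgm, hof_glue hhm]
  -- now assemble the sums
  have hL : ∑ v ∈ T''.minSet, pairing T (graft T' T'' v) = D1.card := by
    rw [hD1, Finset.card_sigma]
    exact Finset.sum_congr rfl fun v _ => pairing_eq_card _ _
  have hR : D2.card = ∑ Y ∈ T.circSet,
      ((isoFinset (T.restrict Y) T').card
        * (isoFinset (T.restrict (T.carrier \ Y)) T'').card) * n := by
    rw [hD2, Finset.card_sigma]
    refine Finset.sum_congr rfl fun Y hY => ?_
    rw [Finset.card_sigma]
    have : ∀ p ∈ (isoFinset (T.restrict Y) T') ×ˢ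
        (isoFinset (T.restrict (T.carrier \ Y)) T''),
        (T''.bag (p.2 (wit a T Y))).card = n := by
      rintro ⟨g, h⟩ hp
      rcases Finset.mem_product.1 hp with ⟨hg, hh⟩
      exact hbag_n Y hY g hg h hh
    rw [Finset.sum_congr rfl this, Finset.sum_const, Finset.card_product,
      smul_eq_mul]
  rw [hL, hcard, hR, Finset.mul_sum]
  refine Finset.sum_congr rfl fun Y hY => ?_
  rw [pairing_eq_card, pairing_eq_card]
  ring

end NAPproof

/-- If the set of bags `C' = {v̄ : v ∈ min(T''), T ≅ T' ↘_v T''}` is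
nonempty, then all these bags have the same cardinality `n > 0`, and
`⟨δ(T), T' ⊗ T''⟩ = (1/(n|min(T)|)) ⟨T, T' ▷ T''⟩` where
`T' ▷ T'' = Σ_{v ∈ min(T'')} T' ↘_v T''`. -/
theorem delta_pairing_preorder {α : Type*} [DecidableEq α] (T T' T'' : FinPre α)
    (hT : T.Connected) (hT' : T'.Connected) (hT'' : T''.Connected)
    (hd : Disjoint T'.carrier T''.carrier)
    (hne : (T''.minSet.filter
      (fun v => (FinPre.Isos T (FinPre.graft T' T'' v)).Nonempty)).Nonempty) :
    ∃ n : ℕ, 0 < n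
      ∧ (∀ v ∈ T''.minSet.filter
            (fun v => (FinPre.Isos T (FinPre.graft T' T'' v)).Nonempty),
          (T''.bag v).card = n)
      ∧ ((T.minSet.card : ℚ))⁻¹ * ∑ Y ∈ T.circSet,
            (FinPre.pairing (T.restrict Y) T' : ℚ)
              * (FinPre.pairing (T.restrict (T.carrier \ Y)) T'' : ℚ)
          = (1 / ((n : ℚ) * (T.minSet.card : ℚ))) * ∑ v ∈ T''.minSet,
            (FinPre.pairing T (FinPre.graft T' T'' v) : ℚ) := by
  obtain ⟨v₀, hv₀'⟩ := hne
  rcases Finset.mem_filter.1 hv₀' with ⟨hv₀min, hne₀⟩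
  obtain ⟨f₀, hf₀⟩ := hne₀
  have hv₀c : v₀ ∈ T''.carrier := NAPproof.minSet_subset_carrier T'' hv₀min
  have hpos : 0 < (T''.bag v₀).card := Finset.card_pos.2
    ⟨v₀, NAPproof.mem_bag.2 ⟨hv₀c, T''.le_refl v₀ hv₀c, T''.le_refl v₀ hv₀c⟩⟩
  refine ⟨(T''.bag v₀).card, hpos, ?_, ?_⟩
  · intro u hu
    rcases Finset.mem_filter.1 hu with ⟨humin, hneu⟩
    obtain ⟨fu, hfu⟩ := hneu
    exact NAPproof.bagcard_eq hd hT' humin hv₀min hfu hf₀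
  · have key := NAPproof.main_count hT hT' hd hv₀min hf₀
    have key' : (∑ v ∈ T''.minSet, (FinPre.pairing T (FinPre.graft T' T'' v) : ℚ))
        = ((T''.bag v₀).card : ℚ) * ∑ Y ∈ T.circSet,
            (FinPre.pairing (T.restrict Y) T' : ℚ)
              * (FinPre.pairing (T.restrict (T.carrier \ Y)) T'' : ℚ) := by
      exact_mod_cast key
    have hn0 : (((T''.bag v₀).card : ℚ)) ≠ 0 := by
      exact_mod_cast hpos.ne'
    have hm : ((T.minSet.card : ℚ))⁻¹
        = ((T''.bag v₀).card : ℚ)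
          * (1 / (((T''.bag v₀).card : ℚ) * (T.minSet.card : ℚ))) := by
      rw [one_div, mul_inv, ← mul_assoc, mul_inv_cancel₀ hn0, one_mul]
    rw [key', hm]
    ring
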